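/- Let F_q be a finite field and let 0 ≤ r_1 ≤ d_1 ≤ d_2 and r_2 ≥ 0. Then C_q(d_2, r_2, d_1, r_1) ≠ 0 if and only if r_2 ≤ d_2 and r_1 ≤ r_2 ≤ r_1 + 2(d_2 − d_1). -/

import Mathlib

/-- The standard symmetric bilinear form of rank `r` on `K^d` (for `r ≤ d`): the
diagonal matrix with `r` ones followed by zeros. -/
def stdForm (K : Type) [Field K] (d r : ℕ) : Matrix (Fin d) (Fin d) K :=
  Matrix.diagonal fun i => if (i : ℕ) < r then 1 else 0

open Matrix Submodule Module

variable {K : Type} [Field K]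

/-- Column selection doesn't increase rank. -/
lemma rank_sub_col_le {a n n' : ℕ} (A : Matrix (Fin a) (Fin n) K) (f : Fin n' → Fin n) :
    (A.submatrix id f).rank ≤ A.rank := by
  rw [Matrix.rank_eq_finrank_span_cols, Matrix.rank_eq_finrank_span_cols]
  apply Submodule.finrank_mono
  apply Submodule.span_mono
  rintro _ ⟨j, rfl⟩
  exact ⟨f j, rfl⟩

lemma rank_sub_row_le {a a' n : ℕ} (A : Matrix (Fin a) (Fin n) K) (f : Fin a' → Fin a) :
    (A.submatrix f id).rank ≤ A.rank := by
  rw [← Matrix.rank_transpose (A.submatrix f id), ← Matrix.rank_transpose A]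
  exact rank_sub_col_le Aᵀ f

/-- Dropping columns decreases rank by at most the number of dropped columns. -/
lemma rank_le_sub_col_add {a d₁ d₂ : ℕ} (hd : d₁ ≤ d₂) (A : Matrix (Fin a) (Fin d₂) K) :
    A.rank ≤ (A.submatrix id (Fin.castLE hd)).rank + (d₂ - d₁) := by
  rw [Matrix.rank_eq_finrank_span_cols, Matrix.rank_eq_finrank_span_cols]
  set w : Fin (d₂ - d₁) → (Fin a → K) := fun j => Aᵀ ⟨d₁ + j, by omega⟩ with hw
  have hsub : Submodule.span K (Set.range Aᵀ) ≤
      Submodule.span K (Set.range (A.submatrix id (Fin.castLE hd))ᵀ) ⊔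
      Submodule.span K (Set.range w) := by
    rw [← Submodule.span_union]
    apply Submodule.span_mono
    rintro _ ⟨j, rfl⟩
    by_cases hj : (j : ℕ) < d₁
    · exact Or.inl ⟨⟨j, hj⟩, rfl⟩
    · have hj' : (⟨d₁ + ((j:ℕ) - d₁), by omega⟩ : Fin d₂) = j := by
        apply Fin.ext
        show d₁ + ((j:ℕ) - d₁) = (j:ℕ)
        omega
      exact Or.inr ⟨⟨(j:ℕ) - d₁, by omega⟩, by show Aᵀ ⟨d₁ + ((j:ℕ) - d₁), by omega⟩ = Aᵀ j; rw [hj']⟩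
  calc finrank K (Submodule.span K (Set.range Aᵀ))
      ≤ finrank K ↥(Submodule.span K (Set.range (A.submatrix id (Fin.castLE hd))ᵀ) ⊔
        Submodule.span K (Set.range w)) := Submodule.finrank_mono hsub
    _ ≤ finrank K (Submodule.span K (Set.range (A.submatrix id (Fin.castLE hd))ᵀ)) +
        finrank K (Submodule.span K (Set.range w)) := by
        have := Submodule.finrank_sup_add_finrank_inf_eq
          (Submodule.span K (Set.range (A.submatrix id (Fin.castLE hd))ᵀ))
          (Submodule.span K (Set.range w))
        omega
    _ ≤ _ := by
        gcongr
        · exact le_of_eq rfl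
        exact (finrank_range_le_card w).trans_eq (Fintype.card_fin _)

/-- column vector: indicator of coordinate `c`. -/
def colv (d : ℕ) (c : ℕ) : Fin d → K := fun i => if (i : ℕ) = c then 1 else 0

lemma colv_eq_single {d : ℕ} (c : Fin d) : colv (K := K) d (c : ℕ) = Pi.single c 1 := by
  funext i
  rw [Pi.single_apply]
  exact if_congr (by simp [Fin.ext_iff]) rfl rfl

/-- index map for the spanning family -/
def phiv (r₁ t d₁ k : ℕ) : ℕ := if k < r₁ + t then k else k - (r₁ + t) + d₁

lemma exists_ext (d₁ d₂ r₁ t m : ℕ) (h1 : r₁ + t ≤ d₁) (h2 : d₁ + m ≤ d₂) (h3 : t ≤ m)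
    (hd : d₁ ≤ d₂) :
    ∃ M : Matrix (Fin d₂) (Fin d₂) K, M.IsSymm ∧ M.rank = r₁ + t + m ∧
      M.submatrix (Fin.castLE hd) (Fin.castLE hd) = stdForm K d₁ r₁ := by
  set M : Matrix (Fin d₂) (Fin d₂) K := Matrix.of fun i j : Fin d₂ =>
    if ((i:ℕ) = (j:ℕ) ∧ (i:ℕ) < r₁) ∨ ((i:ℕ) = (j:ℕ) ∧ d₁ ≤ (i:ℕ) ∧ (i:ℕ) < d₁ + m) ∨
       (r₁ ≤ (i:ℕ) ∧ (i:ℕ) < r₁ + t ∧ (j:ℕ) = (i:ℕ) - r₁ + d₁) ∨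
       (r₁ ≤ (j:ℕ) ∧ (j:ℕ) < r₁ + t ∧ (i:ℕ) = (j:ℕ) - r₁ + d₁) then (1:K) else 0 with hM
  refine ⟨M, ?_, ?_, ?_⟩
  · -- symmetric
    ext i j
    simp only [hM, Matrix.transpose_apply, Matrix.of_apply]
    exact if_congr (by omega) rfl rfl
  · -- rank
    have hcol1 : ∀ j : Fin d₂, (j:ℕ) < r₁ → Mᵀ j = colv (K:=K) d₂ (j:ℕ) := by
      intro j hj
      funext i
      have hi := i.2; have hj2 := j.2
      simp only [hM, Matrix.transpose_apply, Matrix.of_apply, colv]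
      exact if_congr (by omega) rfl rfl
    have hcol2 : ∀ j : Fin d₂, r₁ ≤ (j:ℕ) → (j:ℕ) < r₁ + t →
        Mᵀ j = colv (K:=K) d₂ ((j:ℕ) - r₁ + d₁) := by
      intro j hj1 hj2
      funext i
      have hi := i.2
      simp only [hM, Matrix.transpose_apply, Matrix.of_apply, colv]
      exact if_congr (by omega) rfl rfl
    have hcol3 : ∀ j : Fin d₂, r₁ + t ≤ (j:ℕ) → (j:ℕ) < d₁ → Mᵀ j = 0 := by
      intro j hj1 hj2
      funext i
      have hi := i.2
      simp only [hM, Matrix.transpose_apply, Matrix.of_apply, Pi.zero_apply]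
      rw [if_neg]
      omega
    have hcol4a : ∀ j : Fin d₂, d₁ ≤ (j:ℕ) → (j:ℕ) < d₁ + m → (j:ℕ) - d₁ < t →
        Mᵀ j = colv (K:=K) d₂ (j:ℕ) + colv (K:=K) d₂ ((j:ℕ) - d₁ + r₁) := by
      intro j hj1 hj2 hj3
      funext i
      have hi := i.2
      simp only [hM, Matrix.transpose_apply, Matrix.of_apply, colv, Pi.add_apply]
      split_ifs <;> (try (exfalso; omega)) <;> simp
    have hcol4b : ∀ j : Fin d₂, d₁ ≤ (j:ℕ) → (j:ℕ) < d₁ + m → t ≤ (j:ℕ) - d₁ →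
        Mᵀ j = colv (K:=K) d₂ (j:ℕ) := by
      intro j hj1 hj2 hj3
      funext i
      have hi := i.2
      simp only [hM, Matrix.transpose_apply, Matrix.of_apply, colv]
      exact if_congr (by omega) rfl rfl
    have hcol5 : ∀ j : Fin d₂, d₁ + m ≤ (j:ℕ) → Mᵀ j = 0 := by
      intro j hj1
      funext i
      have hi := i.2; have hj2 := j.2
      simp only [hM, Matrix.transpose_apply, Matrix.of_apply, Pi.zero_apply]
      rw [if_neg]
      omega
    -- the spanning family
    set v : Fin (r₁ + t + m) → (Fin d₂ → K) :=
      fun k => colv (K:=K) d₂ (phiv r₁ t d₁ (k:ℕ)) with hv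
    have hφbound : ∀ k : Fin (r₁ + t + m), phiv r₁ t d₁ (k:ℕ) < d₂ := by
      intro k
      have hk := k.2
      unfold phiv
      split <;> omega
    have hvsingle : ∀ k : Fin (r₁ + t + m),
        v k = Pi.single (⟨phiv r₁ t d₁ (k:ℕ), hφbound k⟩ : Fin d₂) 1 := by
      intro k
      exact colv_eq_single (⟨phiv r₁ t d₁ (k:ℕ), hφbound k⟩ : Fin d₂)
    have hli : LinearIndependent K v := by
      have hveq : v = (Pi.basisFun K (Fin d₂)) ∘
          fun k : Fin (r₁ + t + m) => (⟨phiv r₁ t d₁ (k:ℕ), hφbound k⟩ : Fin d₂) := by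
        funext k
        rw [hvsingle k]
        simp
      rw [hveq]
      apply (Pi.basisFun K (Fin d₂)).linearIndependent.comp
      intro a b hab
      have hab' : phiv r₁ t d₁ (a:ℕ) = phiv r₁ t d₁ (b:ℕ) := congrArg Fin.val hab
      have ha := a.2; have hb := b.2
      unfold phiv at hab'
      apply Fin.ext
      split_ifs at hab' <;> omega
    have hMcol : ∀ j : Fin d₂, Mᵀ j ∈ LinearMap.range M.mulVecLin := by
      intro j
      refine ⟨Pi.single j 1, ?_⟩
      funext i
      simp [Matrix.mulVecLin_apply, Matrix.transpose_apply]
    have hle1 : Submodule.span K (Set.range Mᵀ) ≤ Submodule.span K (Set.range v) := by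
      rw [Submodule.span_le]
      rintro _ ⟨j, rfl⟩
      have hj := j.2
      by_cases hc1 : (j:ℕ) < r₁
      · rw [hcol1 j hc1]
        have he : colv (K:=K) d₂ (j:ℕ) = v ⟨(j:ℕ), by omega⟩ := by
          show colv (K:=K) d₂ (j:ℕ) = colv (K:=K) d₂ (phiv r₁ t d₁ (j:ℕ))
          rw [show phiv r₁ t d₁ (j:ℕ) = (j:ℕ) from by unfold phiv; split <;> omega]
        rw [he]
        exact Submodule.subset_span (Set.mem_range_self _)
      by_cases hc2 : (j:ℕ) < r₁ + t
      · rw [hcol2 j (by omega) hc2]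
        have he : colv (K:=K) d₂ ((j:ℕ) - r₁ + d₁) = v ⟨(j:ℕ) + t, by omega⟩ := by
          show colv (K:=K) d₂ ((j:ℕ) - r₁ + d₁) = colv (K:=K) d₂ (phiv r₁ t d₁ ((j:ℕ) + t))
          rw [show phiv r₁ t d₁ ((j:ℕ) + t) = (j:ℕ) - r₁ + d₁ from by unfold phiv; split <;> omega]
        rw [he]
        exact Submodule.subset_span (Set.mem_range_self _)
      by_cases hc3 : (j:ℕ) < d₁
      · rw [hcol3 j (by omega) hc3]; exact Submodule.zero_mem _
      by_cases hc4 : (j:ℕ) < d₁ + m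
      · by_cases hc5 : (j:ℕ) - d₁ < t
        · rw [hcol4a j (by omega) hc4 hc5]
          have e1 : colv (K:=K) d₂ (j:ℕ) = v ⟨(j:ℕ) - d₁ + r₁ + t, by omega⟩ := by
            show colv (K:=K) d₂ (j:ℕ) = colv (K:=K) d₂ (phiv r₁ t d₁ ((j:ℕ) - d₁ + r₁ + t))
            rw [show phiv r₁ t d₁ ((j:ℕ) - d₁ + r₁ + t) = (j:ℕ) from by unfold phiv; split <;> omega]
          have e2 : colv (K:=K) d₂ ((j:ℕ) - d₁ + r₁) = v ⟨(j:ℕ) - d₁ + r₁, by omega⟩ := by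
            show colv (K:=K) d₂ ((j:ℕ) - d₁ + r₁) = colv (K:=K) d₂ (phiv r₁ t d₁ ((j:ℕ) - d₁ + r₁))
            rw [show phiv r₁ t d₁ ((j:ℕ) - d₁ + r₁) = (j:ℕ) - d₁ + r₁ from by unfold phiv; split <;> omega]
          rw [e1, e2]
          exact Submodule.add_mem _ (Submodule.subset_span (Set.mem_range_self _))
            (Submodule.subset_span (Set.mem_range_self _))
        · rw [hcol4b j (by omega) hc4 (by omega)]
          have he : colv (K:=K) d₂ (j:ℕ) = v ⟨(j:ℕ) - d₁ + r₁ + t, by omega⟩ := by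
            show colv (K:=K) d₂ (j:ℕ) = colv (K:=K) d₂ (phiv r₁ t d₁ ((j:ℕ) - d₁ + r₁ + t))
            rw [show phiv r₁ t d₁ ((j:ℕ) - d₁ + r₁ + t) = (j:ℕ) from by unfold phiv; split <;> omega]
          rw [he]
          exact Submodule.subset_span (Set.mem_range_self _)
      · rw [hcol5 j (by omega)]; exact Submodule.zero_mem _
    have hle2 : Submodule.span K (Set.range v) ≤ Submodule.span K (Set.range Mᵀ) := by
      rw [Submodule.span_le]
      rintro _ ⟨k, rfl⟩
      have hk := k.2
      have hmem : ∀ j : Fin d₂, Mᵀ j ∈ Submodule.span K (Set.range Mᵀ) :=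
        fun j => Submodule.subset_span (Set.mem_range_self _)
      by_cases hc1 : (k:ℕ) < r₁
      · have he : v k = Mᵀ ⟨(k:ℕ), by omega⟩ := by
          rw [hcol1 ⟨(k:ℕ), by omega⟩ hc1]
          show colv (K:=K) d₂ (phiv r₁ t d₁ (k:ℕ)) = colv (K:=K) d₂ (k:ℕ)
          rw [show phiv r₁ t d₁ (k:ℕ) = (k:ℕ) from by unfold phiv; split <;> omega]
        rw [he]; exact hmem _
      by_cases hc2 : (k:ℕ) < r₁ + t
      · have he : v k = Mᵀ ⟨(k:ℕ) - r₁ + d₁, by omega⟩ - Mᵀ ⟨(k:ℕ), by omega⟩ := by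
          rw [hcol4a ⟨(k:ℕ) - r₁ + d₁, by omega⟩ (show d₁ ≤ (k:ℕ) - r₁ + d₁ by omega)
              (show (k:ℕ) - r₁ + d₁ < d₁ + m by omega)
              (show (k:ℕ) - r₁ + d₁ - d₁ < t by omega),
            hcol2 ⟨(k:ℕ), by omega⟩ (show r₁ ≤ (k:ℕ) by omega) (show (k:ℕ) < r₁ + t by omega)]
          show colv (K:=K) d₂ (phiv r₁ t d₁ (k:ℕ)) =
            (colv (K:=K) d₂ ((k:ℕ) - r₁ + d₁) + colv (K:=K) d₂ ((k:ℕ) - r₁ + d₁ - d₁ + r₁)) -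
              colv (K:=K) d₂ ((k:ℕ) - r₁ + d₁)
          rw [show (k:ℕ) - r₁ + d₁ - d₁ + r₁ = (k:ℕ) by omega,
            show phiv r₁ t d₁ (k:ℕ) = (k:ℕ) by unfold phiv; split <;> omega]
          abel
        rw [he]
        exact Submodule.sub_mem _ (hmem _) (hmem _)
      · by_cases hc3 : (k:ℕ) - (r₁ + t) < t
        · have he : v k = Mᵀ ⟨(k:ℕ) - (r₁ + t) + r₁, by omega⟩ := by
            rw [hcol2 ⟨(k:ℕ) - (r₁ + t) + r₁, by omega⟩ (show r₁ ≤ (k:ℕ) - (r₁ + t) + r₁ by omega)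
              (show (k:ℕ) - (r₁ + t) + r₁ < r₁ + t by omega)]
            show colv (K:=K) d₂ (phiv r₁ t d₁ (k:ℕ)) =
              colv (K:=K) d₂ ((k:ℕ) - (r₁ + t) + r₁ - r₁ + d₁)
            rw [show phiv r₁ t d₁ (k:ℕ) = (k:ℕ) - (r₁ + t) + r₁ - r₁ + d₁ from by
              unfold phiv; split <;> omega]
          rw [he]; exact hmem _
        · have he : v k = Mᵀ ⟨(k:ℕ) - (r₁ + t) + d₁, by omega⟩ := by
            rw [hcol4b ⟨(k:ℕ) - (r₁ + t) + d₁, by omega⟩ (show d₁ ≤ (k:ℕ) - (r₁ + t) + d₁ by omega)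
              (show (k:ℕ) - (r₁ + t) + d₁ < d₁ + m by omega)
              (show t ≤ (k:ℕ) - (r₁ + t) + d₁ - d₁ by omega)]
            show colv (K:=K) d₂ (phiv r₁ t d₁ (k:ℕ)) =
              colv (K:=K) d₂ ((k:ℕ) - (r₁ + t) + d₁)
            rw [show phiv r₁ t d₁ (k:ℕ) = (k:ℕ) - (r₁ + t) + d₁ from by unfold phiv; split <;> omega]
          rw [he]; exact hmem _
    have hspan : Submodule.span K (Set.range Mᵀ) = Submodule.span K (Set.range v) :=
      le_antisymm hle1 hle2
    rw [Matrix.rank_eq_finrank_span_cols, show Set.range M.col = Set.range Mᵀ from rfl, hspan, finrank_span_eq_card hli, Fintype.card_fin]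
  · -- restriction
    ext i j
    have hi := i.2; have hj := j.2
    simp only [hM, Matrix.submatrix_apply, Matrix.of_apply, stdForm, Matrix.diagonal_apply,
      Fin.coe_castLE, Fin.ext_iff]
    split_ifs <;> first | rfl | (exfalso; omega)

lemma stdForm_rank {d r : ℕ} (h : r ≤ d) : (stdForm K d r).rank = r := by
  classical
  rw [stdForm, Matrix.rank_diagonal]
  have hiff : ∀ i : Fin d, ((if (i:ℕ) < r then (1:K) else 0) ≠ 0) ↔ (i:ℕ) < r := by
    intro i; split <;> simp_all
  rw [Fintype.card_congr (Equiv.subtypeEquivRight hiff)]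
  rw [Fintype.card_congr
    (⟨fun i => (⟨(i.1 : ℕ), i.2⟩ : Fin r), fun j => ⟨⟨(j : ℕ), by omega⟩, j.2⟩,
      fun i => Subtype.ext (Fin.ext rfl), fun j => Fin.ext rfl⟩ :
      {i : Fin d // (i:ℕ) < r} ≃ Fin r)]
  exact Fintype.card_fin r

/-- `C_q(d₂, r₂, d₁, r₁)`: the number of symmetric bilinear forms on `F_q^{d₂}` of rank
`r₂` whose restriction to `F_q^{d₁}` (embedded as the span of the first `d₁` standard
basis vectors) is a fixed symmetric bilinear form of rank `r₁` — this number does not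
depend on the choice of the fixed form, so we use the standard one — with the
convention that `C_q(d₂, r₂, d₁, r₁) = 0` when `r₁ > d₁` (or `d₁ > d₂`). -/
noncomputable def C (K : Type) [Field K] [Fintype K] (d₂ r₂ d₁ r₁ : ℕ) : ℕ :=
  if h : d₁ ≤ d₂ ∧ r₁ ≤ d₁ then
    Nat.card {M : Matrix (Fin d₂) (Fin d₂) K //
      M.IsSymm ∧ M.rank = r₂ ∧
      M.submatrix (Fin.castLE h.1) (Fin.castLE h.1) = stdForm K d₁ r₁}
  else 0

/-- For `0 ≤ r₁ ≤ d₁ ≤ d₂` and `r₂ ≥ 0`, the extension count `C_q(d₂, r₂, d₁, r₁)` is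
nonzero if and only if `r₂ ≤ d₂` and `r₁ ≤ r₂ ≤ r₁ + 2(d₂ - d₁)`. -/
theorem stmt_10 (K : Type) [Field K] [Fintype K] (d₁ d₂ r₁ r₂ : ℕ)
    (hr : r₁ ≤ d₁) (hd : d₁ ≤ d₂) :
    C K d₂ r₂ d₁ r₁ ≠ 0 ↔ r₂ ≤ d₂ ∧ r₁ ≤ r₂ ∧ r₂ ≤ r₁ + 2 * (d₂ - d₁) := by
  rw [C, dif_pos ⟨hd, hr⟩, Nat.card_ne_zero]
  constructor
  · rintro ⟨⟨M, hsym, hrank, hres⟩, -⟩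
    have hsub : (M.submatrix (Fin.castLE hd) (Fin.castLE hd)).rank ≤ M.rank := by
      have e1 : M.submatrix (Fin.castLE hd) (Fin.castLE hd)
          = (M.submatrix (Fin.castLE hd) id).submatrix id (Fin.castLE hd) := rfl
      calc (M.submatrix (Fin.castLE hd) (Fin.castLE hd)).rank
          ≤ (M.submatrix (Fin.castLE hd) id).rank := by
            rw [e1]; exact rank_sub_col_le _ _
        _ ≤ M.rank := rank_sub_row_le _ _
    have hres' : M.submatrix (Fin.castLE hd) (Fin.castLE hd) = stdForm K d₁ r₁ := hres
    refine ⟨?_, ?_, ?_⟩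
    · rw [← hrank]
      simpa using M.rank_le_card_width
    · rw [← hrank]
      rw [hres', stdForm_rank hr] at hsub
      exact hsub
    · have hA : M.rank ≤ (M.submatrix id (Fin.castLE hd)).rank + (d₂ - d₁) :=
        rank_le_sub_col_add hd M
      have hB : (M.submatrix id (Fin.castLE hd)).rank
          ≤ (M.submatrix (Fin.castLE hd) (Fin.castLE hd)).rank + (d₂ - d₁) := by
        rw [← Matrix.rank_transpose (M.submatrix id (Fin.castLE hd))]
        calc (M.submatrix id (Fin.castLE hd))ᵀ.rank
            ≤ ((M.submatrix id (Fin.castLE hd))ᵀ.submatrix id (Fin.castLE hd)).rank + (d₂ - d₁) :=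
              rank_le_sub_col_add hd _
          _ = (M.submatrix (Fin.castLE hd) (Fin.castLE hd))ᵀ.rank + (d₂ - d₁) := rfl
          _ = (M.submatrix (Fin.castLE hd) (Fin.castLE hd)).rank + (d₂ - d₁) := by
              rw [Matrix.rank_transpose]
      rw [hres', stdForm_rank hr] at hB
      rw [hrank] at hA
      omega
  · rintro ⟨h2, h12, hub⟩
    set e := d₂ - d₁ with he
    set s := r₂ - r₁ with hs
    set m := min s e with hm
    set t := s - m with ht
    obtain ⟨M, hsy, hrk, hres⟩ := exists_ext (K := K) d₁ d₂ r₁ t m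
      (by omega) (by omega) (by omega) hd
    refine ⟨⟨M, hsy, hrk.trans (by omega), hres⟩, ?_⟩
    infer_instance
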